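/- Let α > 0, let l ≥ 1 be an integer with 2αl+2l−2 > 0, let σ² > 0, and suppose η lies in the open interval ( 2αl(2αl+2l−2)^{1+1/α−1/(αl)} / ((4αl+2l−2)^{2+1/α−1/(αl)}(1+σ²)^{1+1/α−1/(αl)}), 2αl(2αl+2l−2)^{1+1/α−1/(αl)} / (4αl+2l−2)^{2+1/α−1/(αl)} ). Let δ ≥ ((2αl+2l−2)/(4αl+2l−2))^{1/(2α)}. Then: (i) every differentiable λ_B : [0,∞) → ℝ with λ_B(0) = δ satisfying λ_B'(t) = l·λ_B(t)·(−(1+σ²)λ_B(t)^{4α+2−2/l} + λ_B(t)^{2α+2−2/l} − η) converges to 0 as t → ∞; and (ii) every differentiable λ_S : [0,∞) → ℝ with λ_S(0) = δ satisfying λ_S'(t) = l·λ_S(t)·(−λ_S(t)^{4α+2−2/l} + λ_S(t)^{2α+2−2/l} − η) converges to a limit c with ((2αl+2l−2)/(4αl+2l−2))^{1/(2α)} < c < 1 and −c^{4α+2−2/l} + c^{2α+2−2/l} − η = 0. -/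

import Mathlib

open Filter

section Helpers

open Set

lemma no_upcross {f : ℝ → ℝ} (hf : Differentiable ℝ f) {x t0 t1 : ℝ}
    (h01 : t0 ≤ t1) (h0 : f t0 < x)
    (hx : ∀ t, t0 ≤ t → t ≤ t1 → f t = x → deriv f t < 0) :
    f t1 < x := by
  by_contra h
  push_neg at h
  set S : Set ℝ := {t | t ∈ Set.Icc t0 t1 ∧ x ≤ f t} with hS
  have ht1S : t1 ∈ S := ⟨⟨h01, le_refl _⟩, h⟩
  have hclosed : IsClosed S := by
    apply IsClosed.inter isClosed_Icc
    exact isClosed_le continuous_const hf.continuous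
  have hbdd : BddBelow S := ⟨t0, fun t ht => ht.1.1⟩
  have hsmem : sInf S ∈ S := hclosed.csInf_mem ⟨t1, ht1S⟩ hbdd
  set s := sInf S with hsdef
  have hs0 : t0 ≤ s := hsmem.1.1
  have hs1 : s ≤ t1 := hsmem.1.2
  have hnotS : ∀ t, t0 ≤ t → t < s → f t < x := by
    intro t ht0 hts
    by_contra hfx
    push_neg at hfx
    exact absurd (csInf_le hbdd ⟨⟨ht0, hts.le.trans hs1⟩, hfx⟩) (not_le.mpr hts)
  have hst0 : t0 < s := by
    rcases lt_or_eq_of_le hs0 with h' | h'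
    · exact h'
    · exact absurd (h' ▸ hsmem.2) (not_le.mpr h0)
  have hfs : f s = x := by
    rcases lt_or_eq_of_le hsmem.2 with h' | h'
    · exfalso
      have hc : ContinuousAt f s := hf.continuous.continuousAt
      have hev : ∀ᶠ t in nhds s, x < f t :=
        continuousAt_const.eventually_lt hc h'
      have h2 : ∀ᶠ t in nhdsWithin s (Set.Iio s), (x < f t ∧ t0 < t) ∧ t < s :=
        ((hev.filter_mono nhdsWithin_le_nhds).and
          ((eventually_gt_nhds hst0).filter_mono nhdsWithin_le_nhds)).and
          eventually_mem_nhdsWithin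
      rcases h2.exists with ⟨t, ⟨hxt, ht0t⟩, hts⟩
      exact absurd hxt (not_lt.mpr (hnotS t ht0t.le hts).le)
    · exact h'.symm
  have hd : deriv f s < 0 := hx s hs0 hs1 hfs
  have hder : HasDerivAt f (deriv f s) s := (hf s).hasDerivAt
  rw [hasDerivAt_iff_tendsto_slope] at hder
  have hslope : ∀ᶠ t in nhdsWithin s {s}ᶜ, slope f s t < 0 :=
    hder.eventually (eventually_lt_nhds hd)
  have hslope' : ∀ᶠ t in nhdsWithin s (Set.Iio s), slope f s t < 0 ∧ t0 < t ∧ t < s := by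
    refine Filter.Eventually.and ?_ (Filter.Eventually.and ?_ ?_)
    · exact hslope.filter_mono (nhdsWithin_mono s (fun t ht => ne_of_lt ht))
    · exact (eventually_gt_nhds hst0).filter_mono nhdsWithin_le_nhds
    · exact eventually_mem_nhdsWithin
  rcases hslope'.exists with ⟨t, hsl, ht0t, hts⟩
  have hft : f t < x := hnotS t ht0t.le hts
  have : (0:ℝ) < slope f s t := by
    rw [slope_def_field]
    rw [hfs]
    exact div_pos_iff.mpr (Or.inr ⟨by linarith, by linarith⟩)
  linarith



lemma no_downcross {f : ℝ → ℝ} (hf : Differentiable ℝ f) {x t0 t1 : ℝ}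
    (h01 : t0 ≤ t1) (h0 : x < f t0)
    (hx : ∀ t, t0 ≤ t → t ≤ t1 → f t = x → 0 < deriv f t) :
    x < f t1 := by
  have hg : Differentiable ℝ (fun t => -f t) := hf.neg
  have := no_upcross hg (x := -x) h01 (by simpa using h0) (fun t ht0 ht1 hft => by
    have hfx : f t = x := by simpa [neg_eq_iff_eq_neg] using hft
    have : deriv (fun t => -f t) t = -deriv f t := deriv.neg
    rw [this]
    simpa using hx t ht0 ht1 hfx)
  simpa using this

lemma tendsto_of_neg {f F : ℝ → ℝ} {a b : ℝ} (hf : Differentiable ℝ f)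
    (hab : a ≤ b)
    (hFc : ContinuousOn F (Set.Icc a b))
    (hmem : ∀ t : ℝ, 0 ≤ t → f t ∈ Set.Icc a b)
    (hode : ∀ t : ℝ, 0 ≤ t → deriv f t = F (f t))
    (hFneg : ∀ x, a < x → x ≤ b → F x < 0) :
    Tendsto f atTop (nhds a) := by
  rw [Metric.tendsto_atTop]
  intro ε hε
  -- find t0 ≥ 0 with f t0 < a + ε
  have hstep : ∃ t0 : ℝ, 0 ≤ t0 ∧ f t0 < a + ε := by
    by_contra hcon
    push_neg at hcon
    -- then f t ∈ [a+ε, b] for all t ≥ 0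
    have hsub : Set.Icc (a+ε) b ⊆ Set.Icc a b := Set.Icc_subset_Icc (by linarith) le_rfl
    have hne : (a+ε) ≤ b := le_trans (hcon 0 le_rfl) (hmem 0 le_rfl).2
    obtain ⟨x0, hx0mem, hx0max⟩ :=
      (isCompact_Icc (a := a+ε) (b := b)).exists_isMaxOn (Set.nonempty_Icc.mpr hne)
        (hFc.mono hsub)
    set K := F x0 with hK
    have hKneg : K < 0 := hFneg x0 (by have := hx0mem.1; linarith) hx0mem.2
    -- g t = f t - K t is antitone on Ici 0
    have hg : Differentiable ℝ (fun t => f t - K * t) := hf.sub (differentiable_id.const_mul K)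
    have hanti : AntitoneOn (fun t => f t - K * t) (Set.Ici 0) := by
      apply antitoneOn_of_deriv_nonpos (convex_Ici 0) hg.continuous.continuousOn
        (fun t _ => hg.differentiableAt.differentiableWithinAt)
      intro t ht
      rw [interior_Ici] at ht
      have ht0 : (0:ℝ) ≤ t := le_of_lt ht
      have hder : HasDerivAt (fun t => f t - K * t) (deriv f t - K * 1) t :=
        ((hf t).hasDerivAt).sub ((hasDerivAt_id t).const_mul K)
      rw [hder.deriv, hode t ht0]
      have hmemt : f t ∈ Set.Icc (a+ε) b := ⟨hcon t ht0, (hmem t ht0).2⟩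
      have h2 : F (f t) ≤ K := hx0max hmemt
      linarith
    set T := (b - a + 1) / (-K) with hT
    have hTpos : 0 < T := div_pos (by linarith) (by linarith)
    have := hanti (Set.self_mem_Ici) (Set.mem_Ici.mpr hTpos.le) hTpos.le
    -- f T - K T ≤ f 0 ⇒ f T ≤ f 0 + K T ≤ b + K T = a - 1
    have hKne : K ≠ 0 := ne_of_lt hKneg
    have hKT : K * T = -(b - a + 1) := by
      rw [hT, div_neg, mul_neg, mul_div_cancel₀ _ hKne]
    have hfT : f T ≤ b + K * T := by
      have h0b := (hmem 0 le_rfl).2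
      simp only at this
      linarith
    have := (hmem T hTpos.le).1
    rw [hKT] at hfT
    linarith
  obtain ⟨t0, ht00, ht0⟩ := hstep
  refine ⟨t0, fun t ht => ?_⟩
  have htt : f t < a + ε := by
    rcases le_or_gt (a + ε) b with hcase | hcase
    · exact no_upcross hf ht ht0 (fun u hu0 hu1 hfu => by
        rw [hode u (le_trans ht00 hu0), hfu]
        exact hFneg (a+ε) (by linarith) hcase)
    · exact lt_of_le_of_lt (hmem t (le_trans ht00 ht)).2 hcase
  have hge : a ≤ f t := (hmem t (le_trans ht00 ht)).1
  rw [Real.dist_eq, abs_of_nonneg (by linarith)]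
  linarith

lemma tendsto_of_pos {f F : ℝ → ℝ} {a b : ℝ} (hf : Differentiable ℝ f)
    (hab : a ≤ b)
    (hFc : ContinuousOn F (Set.Icc a b))
    (hmem : ∀ t : ℝ, 0 ≤ t → f t ∈ Set.Icc a b)
    (hode : ∀ t : ℝ, 0 ≤ t → deriv f t = F (f t))
    (hFpos : ∀ x, a ≤ x → x < b → 0 < F x) :
    Tendsto f atTop (nhds b) := by
  have key : Tendsto (fun t => -f t) atTop (nhds (-b)) := by
    apply tendsto_of_neg (F := fun y => -F (-y)) hf.neg (neg_le_neg hab)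
    · apply ContinuousOn.neg
      apply hFc.comp continuousOn_neg
      intro y hy
      exact ⟨by linarith [hy.2], by linarith [hy.1]⟩
    · intro t ht
      have := hmem t ht
      exact ⟨neg_le_neg this.2, neg_le_neg this.1⟩
    · intro t ht
      rw [deriv.neg, hode t ht]
      simp
    · intro x hx1 hx2
      have : 0 < F (-x) := hFpos (-x) (by linarith) (by linarith)
      linarith
  have := key.neg
  simpa using this

lemma key_ineq {m A u : ℝ} (hm : 0 < m) (hA : 0 < A) (hu : 0 < u) :
    u^m * (1 - A*u) ≤ (m/(A*(m+1)))^m * (1/(m+1)) := by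
  set u0 : ℝ := m/(A*(m+1)) with hu0def
  have hm1 : (0:ℝ) < m + 1 := by linarith
  have hu0 : 0 < u0 := div_pos hm (by positivity)
  have h1Au0 : 1 - A*u0 = 1/(m+1) := by
    rw [hu0def]; field_simp; ring
  have hRHS : (0:ℝ) < u0^m * (1/(m+1)) := by positivity
  rcases le_or_gt (1 - A*u) 0 with hc | hc
  · calc u^m * (1 - A*u) ≤ 0 := mul_nonpos_of_nonneg_of_nonpos (by positivity) hc
    _ ≤ u0^m * (1/(m+1)) := hRHS.le
  · have hlog1 : Real.log u - Real.log u0 ≤ u/u0 - 1 := by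
      rw [← Real.log_div (ne_of_gt hu) (ne_of_gt hu0)]
      exact Real.log_le_sub_one_of_pos (div_pos hu hu0)
    have h1Au0pos : 0 < 1 - A*u0 := by rw [h1Au0]; positivity
    have hlog2 : Real.log (1-A*u) - Real.log (1-A*u0) ≤ (1-A*u)/(1-A*u0) - 1 := by
      rw [← Real.log_div (ne_of_gt hc) (ne_of_gt h1Au0pos)]
      exact Real.log_le_sub_one_of_pos (div_pos hc h1Au0pos)
    have hzero : m*(u/u0 - 1) + ((1-A*u)/(1-A*u0) - 1) = 0 := by
      rw [h1Au0, hu0def]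
      field_simp
      ring
    have hsum : Real.log u * m + Real.log (1-A*u) ≤ Real.log u0 * m + Real.log (1-A*u0) := by
      nlinarith [mul_le_mul_of_nonneg_left hlog1 hm.le]
    have hL : u^m * (1-A*u) = Real.exp (Real.log u * m + Real.log (1-A*u)) := by
      rw [Real.exp_add, Real.rpow_def_of_pos hu, Real.exp_log hc]
    have hR : u0^m * (1-A*u0) = Real.exp (Real.log u0 * m + Real.log (1-A*u0)) := by
      rw [Real.exp_add, Real.rpow_def_of_pos hu0, Real.exp_log h1Au0pos]
    calc u^m * (1-A*u) = Real.exp (Real.log u * m + Real.log (1-A*u)) := hL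
      _ ≤ Real.exp (Real.log u0 * m + Real.log (1-A*u0)) := Real.exp_le_exp.mpr hsum
      _ = u0^m * (1-A*u0) := hR.symm
      _ = u0^m * (1/(m+1)) := by rw [h1Au0]

lemma phi_anti {m : ℝ} (hm : 0 < m) :
    StrictAntiOn (fun u : ℝ => u^m * (1-u)) (Set.Ici (m/(m+1))) := by
  have hm1 : (0:ℝ) < m + 1 := by linarith
  have hu0 : 0 < m/(m+1) := div_pos hm hm1
  apply strictAntiOn_of_deriv_neg (convex_Ici _)
  · apply ContinuousOn.mul
    · exact fun u hu =>
        (Real.continuousAt_rpow_const u m (Or.inr hm.le)).continuousWithinAt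
    · exact (continuous_const.sub continuous_id).continuousOn
  · intro u hu
    rw [interior_Ici] at hu
    have hupos : 0 < u := lt_trans hu0 hu
    have hder : HasDerivAt (fun u : ℝ => u^m * (1-u))
        (m * u^(m-1) * (1-u) + u^m * (0-1)) u := by
      exact (Real.hasDerivAt_rpow_const (Or.inl (ne_of_gt hupos))).mul
        ((hasDerivAt_const u 1).sub (hasDerivAt_id u))
    rw [hder.deriv]
    have hum : u^m = u^(m-1) * u := by
      rw [← Real.rpow_add_one (ne_of_gt hupos)]
      ring_nf
    have hup : 0 < u^(m-1) := Real.rpow_pos_of_pos hupos _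
    have hgt : m < (m+1)*u := by
      rw [Set.mem_Ioi] at hu
      calc m = (m+1) * (m/(m+1)) := by field_simp
      _ < (m+1)*u := by exact (mul_lt_mul_iff_right₀ hm1).mpr hu
    rw [hum]
    nlinarith

lemma bound_eq {α L A m : ℝ} (hα : 0 < α) (hL : 1 ≤ L) (hA : 0 < A)
    (hql : 0 < 2*α*L + 2*L - 2) (hmdef : m = 1 + 1/α - 1/(α*L)) :
    2 * α * L * (2 * α * L + 2 * L - 2) ^ (1 + 1 / α - 1 / (α * L)) /
      ((4 * α * L + 2 * L - 2) ^ (2 + 1 / α - 1 / (α * L)) *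
        A ^ (1 + 1 / α - 1 / (α * L)))
    = (m/(A*(m+1)))^m * (1/(m+1)) := by
  have hL0 : (0:ℝ) < L := lt_of_lt_of_le one_pos hL
  have hqlid : 2*α*L+2*L-2 = L*(2*α*m) := by
    rw [hmdef]; field_simp
  have hq0 : 0 < 2*α*m := by
    have h1 : 0 < L*(2*α*m) := hqlid ▸ hql
    rcases mul_pos_iff.mp h1 with ⟨_, h⟩ | ⟨h, _⟩
    · exact h
    · linarith
  have hm0 : 0 < m := by nlinarith
  have hm1 : (0:ℝ) < m + 1 := by linarith
  have hplid : 4*α*L+2*L-2 = L*(2*α*(m+1)) := by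
    rw [hmdef]; field_simp; ring
  have hexp2 : (2 + 1/α - 1/(α*L)) = m + 1 := by rw [hmdef]; ring
  have e1 : (2*α*L+2*L-2)^(1+1/α-1/(α*L)) = L^m * ((2*α)^m * m^m) := by
    rw [← hmdef, hqlid, Real.mul_rpow hL0.le (by positivity),
        Real.mul_rpow (by positivity) hm0.le]
  have e2 : (4*α*L+2*L-2)^(2+1/α-1/(α*L))
      = (L^m*L) * (((2*α)^m*(2*α)) * ((m+1)^m*(m+1))) := by
    rw [hexp2, hplid, Real.mul_rpow hL0.le (by positivity),
        Real.rpow_add_one hL0.ne',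
        Real.mul_rpow (by positivity) hm1.le,
        Real.rpow_add_one (by positivity : (2*α) ≠ 0),
        Real.rpow_add_one hm1.ne']
  have e3 : (m/(A*(m+1)))^m = m^m/(A^m*(m+1)^m) := by
    rw [Real.div_rpow hm0.le (by positivity), Real.mul_rpow hA.le hm1.le]
  rw [e1, e2, e3, ← hmdef]
  have h1 : (0:ℝ) < L^m := Real.rpow_pos_of_pos hL0 m
  have h2 : (0:ℝ) < (2*α)^m := Real.rpow_pos_of_pos (by positivity) m
  have h3 : (0:ℝ) < m^m := Real.rpow_pos_of_pos hm0 m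
  have h4 : (0:ℝ) < (m+1)^m := Real.rpow_pos_of_pos hm1 m
  have h5 : (0:ℝ) < A^m := Real.rpow_pos_of_pos hA m
  field_simp

end Helpers

set_option maxHeartbeats 2000000 in
/-- eigenvalue dynamics of the end-to-end matrix of an `l`-layer
deep linear network trained by DirectSet(α) gradient flow with weight decay
`η` in the admissible interval and initialization
`δ ≥ ((2αl+2l−2)/(4αl+2l−2))^{1/(2α)}`:
(i) the nuisance eigenvalue `λ_B` converges to `0`;
(ii) the invariant eigenvalue `λ_S` converges to a limit `c` with
`((2αl+2l−2)/(4αl+2l−2))^{1/(2α)} < c < 1` and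
`−c^{4α+2−2/l} + c^{2α+2−2/l} − η = 0`. -/
theorem deep_linear_eigen_dynamics
    (α σ2 η δ : ℝ) (l : ℕ) (hα : 0 < α) (hl : 1 ≤ l) (hσ : 0 < σ2)
    (hpos : 0 < 2 * α * (l : ℝ) + 2 * (l : ℝ) - 2)
    (hη1 :
      2 * α * (l : ℝ) *
          (2 * α * (l : ℝ) + 2 * (l : ℝ) - 2) ^
            (1 + 1 / α - 1 / (α * (l : ℝ))) /
        ((4 * α * (l : ℝ) + 2 * (l : ℝ) - 2) ^
            (2 + 1 / α - 1 / (α * (l : ℝ))) *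
          (1 + σ2) ^ (1 + 1 / α - 1 / (α * (l : ℝ)))) < η)
    (hη2 : η <
      2 * α * (l : ℝ) *
          (2 * α * (l : ℝ) + 2 * (l : ℝ) - 2) ^
            (1 + 1 / α - 1 / (α * (l : ℝ))) /
        (4 * α * (l : ℝ) + 2 * (l : ℝ) - 2) ^
            (2 + 1 / α - 1 / (α * (l : ℝ))))
    (hδ : ((2 * α * (l : ℝ) + 2 * (l : ℝ) - 2) /
        (4 * α * (l : ℝ) + 2 * (l : ℝ) - 2)) ^ (1 / (2 * α)) ≤ δ) :
    ((∀ lamB : ℝ → ℝ, Differentiable ℝ lamB → lamB 0 = δ →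
      (∀ t : ℝ, 0 ≤ t →
        deriv lamB t = (l : ℝ) * lamB t *
          (-(1 + σ2) * lamB t ^ (4 * α + 2 - 2 / (l : ℝ))
            + lamB t ^ (2 * α + 2 - 2 / (l : ℝ)) - η)) →
      Tendsto lamB atTop (nhds 0)) ∧
    (∀ lamS : ℝ → ℝ, Differentiable ℝ lamS → lamS 0 = δ →
      (∀ t : ℝ, 0 ≤ t →
        deriv lamS t = (l : ℝ) * lamS t *
          (-lamS t ^ (4 * α + 2 - 2 / (l : ℝ))
            + lamS t ^ (2 * α + 2 - 2 / (l : ℝ)) - η)) →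
      ∃ c : ℝ, Tendsto lamS atTop (nhds c) ∧
        ((2 * α * (l : ℝ) + 2 * (l : ℝ) - 2) /
          (4 * α * (l : ℝ) + 2 * (l : ℝ) - 2)) ^ (1 / (2 * α)) < c ∧
        c < 1 ∧
        -c ^ (4 * α + 2 - 2 / (l : ℝ)) + c ^ (2 * α + 2 - 2 / (l : ℝ)) - η
          = 0)) := by
  set L : ℝ := (l : ℝ) with hLdef
  have hL : (1:ℝ) ≤ L := by rw [hLdef]; exact_mod_cast hl
  have hL0 : (0:ℝ) < L := by linarith
  set m : ℝ := 1 + 1/α - 1/(α*L) with hmdef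
  have hqlid : 2*α*L+2*L-2 = L*(2*α*m) := by
    rw [hmdef]; field_simp
  have hq0 : 0 < 2*α*m := by
    have h1 : 0 < L*(2*α*m) := hqlid ▸ hpos
    rcases mul_pos_iff.mp h1 with ⟨_, h⟩ | ⟨h, _⟩
    · exact h
    · linarith
  have hm0 : 0 < m := by nlinarith
  have hm1 : (0:ℝ) < m + 1 := by linarith
  have hplid : 4*α*L+2*L-2 = L*(2*α*(m+1)) := by
    rw [hmdef]; field_simp; ring
  have hq' : 2*α+2-2/L = 2*α*m := by
    rw [hmdef]; field_simp
  have hp' : 4*α+2-2/L = 2*α*(m+1) := by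
    rw [hmdef]; field_simp; ring
  have hq'0 : 0 < 2*α+2-2/L := by rw [hq']; exact hq0
  have hp'0 : 0 < 4*α+2-2/L := by rw [hp']; positivity
  have h2α0 : (0:ℝ) < 2*α := by positivity
  -- u* identities
  have hustar_id : (2*α*L+2*L-2)/(4*α*L+2*L-2) = m/(m+1) := by
    rw [hqlid, hplid, mul_div_mul_left _ _ hL0.ne', mul_div_mul_left _ _ h2α0.ne']
  have hustar0 : 0 < m/(m+1) := div_pos hm0 hm1
  have hustar1 : m/(m+1) < 1 := (div_lt_one hm1).mpr (by linarith)
  -- η bounds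
  have hA0 : (0:ℝ) < 1 + σ2 := by linarith
  have hBη : (m/((1+σ2)*(m+1)))^m * (1/(m+1)) < η := by
    rw [← bound_eq hα hL hA0 hpos hmdef]; exact hη1
  have hSη : η < (m/(m+1))^m * (1/(m+1)) := by
    have h := bound_eq (A := 1) hα hL one_pos hpos hmdef
    simp only [Real.one_rpow, mul_one, one_mul] at h
    rw [← h]; exact hη2
  have hη0 : 0 < η :=
    lt_trans (mul_pos (Real.rpow_pos_of_pos (by positivity) m) (by positivity)) hBη
  -- rpow cancel helper
  have hpow_cancel : ∀ u : ℝ, 0 ≤ u → (u^(1/(2*α)))^(2*α) = u := by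
    intro u hu
    rw [← Real.rpow_mul hu, one_div, inv_mul_cancel₀ h2α0.ne', Real.rpow_one]
  -- exponent splitting
  have eq_q : ∀ x : ℝ, 0 ≤ x → x^(2*α+2-2/L) = (x^(2*α))^m := by
    intro x hx; rw [hq', Real.rpow_mul hx]
  have eq_p : ∀ x : ℝ, 0 < x → x^(4*α+2-2/L) = (x^(2*α))^m * x^(2*α) := by
    intro x hx
    rw [hp', show 2*α*(m+1) = 2*α*m + 2*α by ring, Real.rpow_add hx,
        Real.rpow_mul hx.le]
  -- part (i) core inequality
  have fB_neg : ∀ x : ℝ, 0 < x →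
      -(1+σ2)*x^(4*α+2-2/L) + x^(2*α+2-2/L) - η < 0 := by
    intro x hx
    have hu : 0 < x^(2*α) := Real.rpow_pos_of_pos hx _
    have key := key_ineq hm0 hA0 hu
    rw [eq_q x hx.le, eq_p x hx]
    have hr : -(1+σ2)*((x^(2*α))^m * x^(2*α)) + (x^(2*α))^m
        = (x^(2*α))^m * (1-(1+σ2)*x^(2*α)) := by ring
    nlinarith [key, hBη]
  -- λ* notation
  set lams : ℝ := (m/(m+1))^(1/(2*α)) with hlamsdef
  have hlams0 : 0 < lams := Real.rpow_pos_of_pos hustar0 _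
  have hδ' : lams ≤ δ := by
    rw [hlamsdef, ← hustar_id]; exact hδ
  have hδ0 : 0 < δ := lt_of_lt_of_le hlams0 hδ'
  -- the root c
  have hφcont : ContinuousOn (fun u : ℝ => u^m*(1-u)) (Set.Icc (m/(m+1)) 1) := by
    apply ContinuousOn.mul
    · exact fun u _ =>
        (Real.continuousAt_rpow_const u m (Or.inr hm0.le)).continuousWithinAt
    · exact (continuous_const.sub continuous_id).continuousOn
  have hφstar : (m/(m+1))^m*(1-(m/(m+1))) = (m/(m+1))^m * (1/(m+1)) := by
    congr 1
    field_simp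
    ring
  have hmem : η ∈ Set.Icc ((fun u : ℝ => u^m*(1-u)) 1) ((fun u : ℝ => u^m*(1-u)) (m/(m+1))) := by
    constructor
    · simp only []
      rw [Real.one_rpow]
      simp
      exact hη0.le
    · simp only []
      rw [hφstar]
      exact hSη.le
  obtain ⟨uc, hucmem, hucval⟩ :=
    intermediate_value_Icc' hustar1.le hφcont hmem
  simp only [] at hucval
  have hanti := phi_anti hm0
  have huc_star : m/(m+1) < uc := by
    rcases lt_or_eq_of_le hucmem.1 with h | h
    · exact h
    · exfalso
      rw [← h, hφstar] at hucval
      linarith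
  have huc1 : uc < 1 := by
    rcases lt_or_eq_of_le hucmem.2 with h | h
    · exact h
    · exfalso
      rw [h, Real.one_rpow] at hucval
      simp at hucval
      linarith
  have huc0 : 0 < uc := lt_trans hustar0 huc_star
  set c : ℝ := uc^(1/(2*α)) with hcdef
  have hc2α : c^(2*α) = uc := hpow_cancel uc huc0.le
  have hc0 : 0 < c := Real.rpow_pos_of_pos huc0 _
  have hc1 : c < 1 := by
    rw [hcdef]
    exact Real.rpow_lt_one huc0.le huc1 (by positivity)
  have hlams_lt_c : lams < c :=
    Real.rpow_lt_rpow hustar0.le huc_star (by positivity)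
  -- value of f_S at c
  have hfSc : -c^(4*α+2-2/L) + c^(2*α+2-2/L) - η = 0 := by
    rw [eq_q c hc0.le, eq_p c hc0, hc2α]
    have : -(uc^m * uc) + uc^m - η = uc^m*(1-uc) - η := by ring
    rw [this, hucval]
    ring
  -- sign of f_S
  have fS_pos : ∀ x : ℝ, lams ≤ x → x < c →
      0 < -x^(4*α+2-2/L) + x^(2*α+2-2/L) - η := by
    intro x hx1 hx2
    have hx0 : 0 < x := lt_of_lt_of_le hlams0 hx1
    have hu1 : m/(m+1) ≤ x^(2*α) := by
      calc m/(m+1) = ((m/(m+1))^(1/(2*α)))^(2*α) := (hpow_cancel _ hustar0.le).symm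
      _ ≤ x^(2*α) := Real.rpow_le_rpow hlams0.le hx1 h2α0.le
    have hu2 : x^(2*α) < uc := by
      rw [← hc2α]
      exact Real.rpow_lt_rpow hx0.le hx2 h2α0
    have hφ := hanti (Set.mem_Ici.mpr hu1) (Set.mem_Ici.mpr huc_star.le) hu2
    simp only [] at hφ
    rw [hucval] at hφ
    rw [eq_q x hx0.le, eq_p x hx0]
    nlinarith [hφ]
  have fS_neg : ∀ x : ℝ, c < x →
      -x^(4*α+2-2/L) + x^(2*α+2-2/L) - η < 0 := by
    intro x hx
    have hx0 : 0 < x := lt_trans hc0 hx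
    have hu1 : m/(m+1) ≤ uc := huc_star.le
    have hu2 : uc < x^(2*α) := by
      rw [← hc2α]
      exact Real.rpow_lt_rpow hc0.le hx h2α0
    have hφ := hanti (Set.mem_Ici.mpr hu1) (Set.mem_Ici.mpr (le_trans hu1 hu2.le)) hu2
    simp only [] at hφ
    rw [hucval] at hφ
    rw [eq_q x hx0.le, eq_p x hx0]
    nlinarith [hφ]
  -- the region just below λ* where f_S > 0
  have hgScont : ∀ x : ℝ, ContinuousAt
      (fun x : ℝ => -x^(4*α+2-2/L) + x^(2*α+2-2/L) - η) x := by
    intro x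
    have h1 : ContinuousAt (fun x : ℝ => x^(4*α+2-2/L)) x :=
      Real.continuousAt_rpow_const x _ (Or.inr hp'0.le)
    have h2 : ContinuousAt (fun x : ℝ => x^(2*α+2-2/L)) x :=
      Real.continuousAt_rpow_const x _ (Or.inr hq'0.le)
    exact (h1.neg.add h2).sub continuousAt_const
  have hgSlams : 0 < -lams^(4*α+2-2/L) + lams^(2*α+2-2/L) - η :=
    fS_pos lams le_rfl hlams_lt_c
  have hev : ∀ᶠ x in nhds lams,
      0 < -x^(4*α+2-2/L) + x^(2*α+2-2/L) - η :=
    continuousAt_const.eventually_lt (hgScont lams) hgSlams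
  obtain ⟨ε0, hε00, hball⟩ := Metric.eventually_nhds_iff.mp hev
  set ε1 : ℝ := min ε0 lams with hε1def
  have hε10 : 0 < ε1 := lt_min hε00 hlams0
  have gS_pos' : ∀ x : ℝ, lams - ε1 < x → x < c →
      0 < -x^(4*α+2-2/L) + x^(2*α+2-2/L) - η := by
    intro x hx1 hx2
    rcases le_or_gt lams x with h | h
    · exact fS_pos x h hx2
    · apply hball
      rw [Real.dist_eq, abs_of_nonpos (by linarith)]
      have : ε1 ≤ ε0 := min_le_left _ _
      linarith
  constructor
  · -- part (i)
    intro lamB hdiff h0 hode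
    set F : ℝ → ℝ := fun x => L * x *
      (-(1+σ2)*x^(4*α+2-2/L) + x^(2*α+2-2/L) - η) with hFdef
    have hode' : ∀ t, 0 ≤ t → deriv lamB t = F (lamB t) := hode
    have hFcont : Continuous F := by
      rw [continuous_iff_continuousAt]
      intro x
      have h1 : ContinuousAt (fun x : ℝ => x^(4*α+2-2/L)) x :=
        Real.continuousAt_rpow_const x _ (Or.inr hp'0.le)
      have h2 : ContinuousAt (fun x : ℝ => x^(2*α+2-2/L)) x :=
        Real.continuousAt_rpow_const x _ (Or.inr hq'0.le)
      exact (continuousAt_const.mul continuousAt_id).mul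
        (((continuousAt_const.mul h1).add h2).sub continuousAt_const)
    have hFneg : ∀ x : ℝ, 0 < x → F x < 0 := by
      intro x hx
      exact mul_neg_of_pos_of_neg (by positivity) (fB_neg x hx)
    -- negative side: F > 0 on (-ε2, 0)
    have hev0 : ∀ᶠ x in nhds (0:ℝ),
        (-(1+σ2)*x^(4*α+2-2/L) + x^(2*α+2-2/L) - η) < 0 := by
      have hc : ContinuousAt
          (fun x : ℝ => -(1+σ2)*x^(4*α+2-2/L) + x^(2*α+2-2/L) - η) 0 := by
        have h1 : ContinuousAt (fun x : ℝ => x^(4*α+2-2/L)) 0 :=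
          Real.continuousAt_rpow_const 0 _ (Or.inr hp'0.le)
        have h2 : ContinuousAt (fun x : ℝ => x^(2*α+2-2/L)) 0 :=
          Real.continuousAt_rpow_const 0 _ (Or.inr hq'0.le)
        exact ((continuousAt_const.mul h1).add h2).sub continuousAt_const
      apply hc.eventually_lt continuousAt_const
      rw [Real.zero_rpow hp'0.ne', Real.zero_rpow hq'0.ne']
      simpa using hη0
    obtain ⟨ε2, hε20, hball2⟩ := Metric.eventually_nhds_iff.mp hev0
    have hFpos : ∀ x : ℝ, -ε2 < x → x < 0 → 0 < F x := by
      intro x hx1 hx2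
      have hb : (-(1+σ2)*x^(4*α+2-2/L) + x^(2*α+2-2/L) - η) < 0 := by
        apply hball2
        rw [Real.dist_eq, sub_zero, abs_of_neg hx2]
        linarith
      have : L * x < 0 := mul_neg_of_pos_of_neg hL0 hx2
      exact mul_pos_of_neg_of_neg this hb
    have hup : ∀ t : ℝ, 0 ≤ t → lamB t ≤ δ := by
      intro t ht
      by_contra hcon
      push_neg at hcon
      set x := (δ + lamB t)/2 with hxdef
      have hx1 : δ < x := by rw [hxdef]; linarith
      have hx2 : x < lamB t := by rw [hxdef]; linarith
      have := no_upcross hdiff ht (x := x) (by rw [h0]; linarith)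
        (fun u hu0 _ hfu => by
          rw [hode' u hu0, hfu]; exact hFneg x (by linarith))
      linarith
    have hlow : ∀ t : ℝ, 0 ≤ t → 0 ≤ lamB t := by
      intro t ht
      by_contra hcon
      push_neg at hcon
      set x := (max (lamB t) (-ε2) + 0)/2 with hxdef
      have hx2 : x < 0 := by
        rw [hxdef]
        have : max (lamB t) (-ε2) < 0 := max_lt hcon (by linarith)
        linarith
      have hx1 : -ε2 < x := by
        rw [hxdef]
        have h1 : -ε2 ≤ max (lamB t) (-ε2) := le_max_right _ _
        linarith
      have hx3 : lamB t < x := by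
        rw [hxdef]
        have h1 : lamB t ≤ max (lamB t) (-ε2) := le_max_left _ _
        have : max (lamB t) (-ε2) < 0 := max_lt hcon (by linarith)
        linarith
      have := no_downcross hdiff ht (x := x) (by rw [h0]; linarith)
        (fun u hu0 _ hfu => by
          rw [hode' u hu0, hfu]; exact hFpos x hx1 hx2)
      linarith
    exact tendsto_of_neg hdiff hδ0.le hFcont.continuousOn
      (fun t ht => ⟨hlow t ht, hup t ht⟩) hode'
      (fun x hx1 _ => hFneg x hx1)
  · -- part (ii)
    intro lamS hdiff h0 hode
    set F : ℝ → ℝ := fun x => L * x *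
      (-x^(4*α+2-2/L) + x^(2*α+2-2/L) - η) with hFdef
    have hode' : ∀ t, 0 ≤ t → deriv lamS t = F (lamS t) := hode
    have hFcont : Continuous F := by
      rw [continuous_iff_continuousAt]
      intro x
      have h1 : ContinuousAt (fun x : ℝ => x^(4*α+2-2/L)) x :=
        Real.continuousAt_rpow_const x _ (Or.inr hp'0.le)
      have h2 : ContinuousAt (fun x : ℝ => x^(2*α+2-2/L)) x :=
        Real.continuousAt_rpow_const x _ (Or.inr hq'0.le)
      exact (continuousAt_const.mul continuousAt_id).mul
        ((h1.neg.add h2).sub continuousAt_const)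
    have hFneg : ∀ x : ℝ, c < x → F x < 0 := by
      intro x hx
      exact mul_neg_of_pos_of_neg
        (by have : 0 < x := lt_trans hc0 hx; positivity) (fS_neg x hx)
    have hFpos : ∀ x : ℝ, lams - ε1 < x → x < c → 0 < F x := by
      intro x hx1 hx2
      have hx0 : 0 < x := by
        have : ε1 ≤ lams := min_le_right _ _
        linarith
      exact mul_pos (by positivity) (gS_pos' x hx1 hx2)
    refine ⟨c, ?_, ?_, hc1, hfSc⟩
    · -- convergence
      rcases le_or_gt δ c with hcase | hcase
      · -- δ ≤ c : increasing up to c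
        have hup : ∀ t : ℝ, 0 ≤ t → lamS t ≤ c := by
          intro t ht
          by_contra hcon
          push_neg at hcon
          set x := (c + lamS t)/2 with hxdef
          have hx1 : c < x := by rw [hxdef]; linarith
          have hx2 : x < lamS t := by rw [hxdef]; linarith
          have := no_upcross hdiff ht (x := x) (by rw [h0]; linarith)
            (fun u hu0 _ hfu => by rw [hode' u hu0, hfu]; exact hFneg x hx1)
          linarith
        have hlow : ∀ t : ℝ, 0 ≤ t → δ ≤ lamS t := by
          intro t ht
          by_contra hcon
          push_neg at hcon
          set x := (max (lamS t) (lams - ε1) + δ)/2 with hxdef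
          have hmaxlt : max (lamS t) (lams - ε1) < δ :=
            max_lt hcon (by linarith [hε10, hδ'])
          have hx2 : x < δ := by rw [hxdef]; linarith
          have hx1 : lams - ε1 < x := by
            rw [hxdef]
            have h1 : lams - ε1 ≤ max (lamS t) (lams - ε1) := le_max_right _ _
            have h2 : lams - ε1 < δ := by linarith [hε10, hδ']
            linarith
          have hx3 : lamS t < x := by
            rw [hxdef]
            have h1 : lamS t ≤ max (lamS t) (lams - ε1) := le_max_left _ _
            linarith
          have hxc : x < c := lt_of_lt_of_le hx2 hcase
          have := no_downcross hdiff ht (x := x) (by rw [h0]; linarith)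
            (fun u hu0 _ hfu => by
              rw [hode' u hu0, hfu]; exact hFpos x hx1 hxc)
          linarith
        exact tendsto_of_pos hdiff hcase hFcont.continuousOn
          (fun t ht => ⟨hlow t ht, hup t ht⟩) hode'
          (fun x hx1 hx2 => hFpos x (by linarith [hε10, hδ']) hx2)
      · -- c < δ : decreasing down to c
        have hup : ∀ t : ℝ, 0 ≤ t → lamS t ≤ δ := by
          intro t ht
          by_contra hcon
          push_neg at hcon
          set x := (δ + lamS t)/2 with hxdef
          have hx1 : δ < x := by rw [hxdef]; linarith
          have hx2 : x < lamS t := by rw [hxdef]; linarith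
          have := no_upcross hdiff ht (x := x) (by rw [h0]; linarith)
            (fun u hu0 _ hfu => by
              rw [hode' u hu0, hfu]; exact hFneg x (by linarith))
          linarith
        have hlow : ∀ t : ℝ, 0 ≤ t → c ≤ lamS t := by
          intro t ht
          by_contra hcon
          push_neg at hcon
          set x := (max (lamS t) (lams - ε1) + c)/2 with hxdef
          have hlamsc : lams - ε1 < c := by linarith [hε10, hlams_lt_c]
          have hmaxlt : max (lamS t) (lams - ε1) < c := max_lt hcon hlamsc
          have hx2 : x < c := by rw [hxdef]; linarith
          have hx1 : lams - ε1 < x := by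
            rw [hxdef]
            have h1 : lams - ε1 ≤ max (lamS t) (lams - ε1) := le_max_right _ _
            linarith
          have hx3 : lamS t < x := by
            rw [hxdef]
            have h1 : lamS t ≤ max (lamS t) (lams - ε1) := le_max_left _ _
            linarith
          have := no_downcross hdiff ht (x := x) (by rw [h0]; linarith)
            (fun u hu0 _ hfu => by
              rw [hode' u hu0, hfu]; exact hFpos x hx1 hx2)
          linarith
        exact tendsto_of_neg hdiff hcase.le hFcont.continuousOn
          (fun t ht => ⟨hlow t ht, hup t ht⟩) hode'
          (fun x hx1 _ => hFneg x hx1)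
    · -- λ* < c
      rw [hustar_id]
      exact hlams_lt_c
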